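/- For the point δ ∈ 𝐒^{3,3}, the (+1)-eigenspace 𝒟_δ^+ of ψ_δ = δ × (·) on δ^⊥ is spanned by {j - ε, ℓ + δℓ, jℓ + εℓ}, and the restriction of the 3-form Ω(x,y,z) = ⟨x × y, z⟩ to 𝒟_δ^+ is nonzero: Ω(j-ε, ℓ+δℓ, jℓ+εℓ) = -4. -/

import Mathlib

open scoped Quaternion

noncomputable section

/-- The split quaternions: `j² = -1`, `δ² = ε² = 1`, `j·δ = -δ·j = ε`
(realized as `i, j, k` in `ℍ[ℝ, -1, 1]`). -/
abbrev H' : Type := ℍ[ℝ, -1, 1]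

/-- The split octonions, as pairs of split quaternions (Cayley–Dickson doubling). -/
abbrev SplitOct : Type := H' × H'

namespace SplitOct

/-- Split octonion multiplication:
`(x₁,y₁)·(x₂,y₂) = (x₁x₂ - ȳ₂y₁, y₂x₁ + y₁x̄₂)`. -/
def omul (z w : SplitOct) : SplitOct :=
  (z.1 * w.1 - star w.2 * z.2, w.2 * z.1 + z.2 * star w.1)

scoped infixl:70 " ⬝ " => omul

/-- The unit `1 = (1,0)`. -/
def oone : SplitOct := (1, 0)

/-- Octonion conjugation `(x,y) ↦ (x̄, -y)`. -/
def oconj (z : SplitOct) : SplitOct := (star z.1, -z.2)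

/-- Real part. -/
def oRe (z : SplitOct) : ℝ := z.1.re

/-- Imaginary part, as a split octonion. -/
def oIm (z : SplitOct) : SplitOct := (z.1 - algebraMap ℝ H' z.1.re, z.2)

/-- Membership in the imaginary split octonions `Im(𝕆')`. -/
def IsIm (z : SplitOct) : Prop := z.1.re = 0

/-- The bilinear form `⟨z,w⟩ = Re (z·w)` on imaginary split octonions. -/
def oin (z w : SplitOct) : ℝ := oRe (z ⬝ w)

/-- The cross product `z × w = Im (z·w)`. -/
def ocross (z w : SplitOct) : SplitOct := oIm (z ⬝ w)

/-- The quadratic form `q(z) = ⟨z,z⟩`. -/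
def q (z : SplitOct) : ℝ := oin z z

def j : SplitOct := ((⟨0,1,0,0⟩ : H'), 0)
def δ' : SplitOct := ((⟨0,0,1,0⟩ : H'), 0)
def ε' : SplitOct := ((⟨0,0,0,1⟩ : H'), 0)
def ℓ' : SplitOct := (0, 1)
def jℓ : SplitOct := (0, (⟨0,1,0,0⟩ : H'))
def δℓ : SplitOct := (0, (⟨0,0,1,0⟩ : H'))
def εℓ : SplitOct := (0, (⟨0,0,0,1⟩ : H'))

end SplitOct

open SplitOct in
/-- For the point `δ ∈ 𝐒^{3,3}`, the `(+1)`-eigenspace `𝒟_δ^+` of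
`ψ_δ = δ × ·` on `δ^⊥` is spanned by `{j - ε, ℓ + δℓ, jℓ + εℓ}`, and the 3-form
`Ω(x,y,z) = ⟨x × y, z⟩` restricted to `𝒟_δ^+` is nonzero:
`Ω(j-ε, ℓ+δℓ, jℓ+εℓ) = -4`. -/
theorem eigenspace_at_delta_and_Omega_value :
    q δ' = 1 ∧
    (∀ w : SplitOct,
      (IsIm w ∧ oin δ' w = 0 ∧ ocross δ' w = w) ↔
      (∃ a b c : ℝ, w = a • (j - ε') + b • (ℓ' + δℓ) + c • (jℓ + εℓ))) ∧
    oin (ocross (j - ε') (ℓ' + δℓ)) (jℓ + εℓ) = -4 := by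
  refine ⟨by norm_num [q, oin, oRe, omul, δ', QuaternionAlgebra.re_mul], ?_, ?_⟩
  · intro w
    obtain ⟨⟨r, x1, x2, x3⟩, y0, y1, y2, y3⟩ := w
    constructor
    · rintro ⟨h1, h2, h3⟩
      simp [ocross, oIm, omul, δ', Prod.ext_iff, QuaternionAlgebra.ext_iff,
        QuaternionAlgebra.re_mul, QuaternionAlgebra.imI_mul, QuaternionAlgebra.imJ_mul,
        QuaternionAlgebra.imK_mul] at h3
      obtain ⟨⟨e1, e2, e3, e4⟩, e5, e6, _, _⟩ := h3
      refine ⟨x1, y0, y1, ?_⟩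
      simp [j, ε', ℓ', δℓ, jℓ, εℓ, Prod.ext_iff, QuaternionAlgebra.ext_iff,
        QuaternionAlgebra.smul_mk, Prod.smul_mk]
      constructorm* _ ∧ _ <;> linarith
    · rintro ⟨a, b, c, h⟩
      rw [h]
      refine ⟨?_, ?_, ?_⟩ <;>
        simp [IsIm, oin, oRe, ocross, oIm, omul, δ', j, ε', ℓ', δℓ, jℓ, εℓ,
          Prod.ext_iff, QuaternionAlgebra.ext_iff, QuaternionAlgebra.re_mul,
          QuaternionAlgebra.imI_mul, QuaternionAlgebra.imJ_mul, QuaternionAlgebra.imK_mul,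
          QuaternionAlgebra.smul_mk, Prod.smul_mk]
  · norm_num [oin, oRe, ocross, oIm, omul, j, ε', ℓ', δℓ, jℓ, εℓ,
      QuaternionAlgebra.re_mul, QuaternionAlgebra.imI_mul, QuaternionAlgebra.imJ_mul,
      QuaternionAlgebra.imK_mul, QuaternionAlgebra.ext_iff, Prod.ext_iff]
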